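/- Let C be a Z2Z4-additive code of type (α,δ;0,δ;0) generated by the rows of (G_X | I_δ), where G_X is any δ×α binary matrix and I_δ is the identity over Z4. Then Φ(C) is a binary LCD code. -/

import Mathlib

open Finset

/-- The ambient mixed alphabet space `Z2^α × Z4^β`. -/
abbrev Amb (α β : ℕ) := (Fin α → ZMod 2) × (Fin β → ZMod 4)

/-- The binary space `Z2^{α+2β}`, represented as `Z2^α × Z2^β × Z2^β`
(binary part, first Gray bits, second Gray bits). -/
abbrev Bin (α β : ℕ) := (Fin α → ZMod 2) × (Fin β → ZMod 2) × (Fin β → ZMod 2)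

/-- The `Z4`-valued inner product `[u,v] = 2·Σ u_i v_i + Σ u'_j v'_j`. -/
def zinner {α β : ℕ} (u v : Amb α β) : ZMod 4 :=
  2 * ∑ i, ((u.1 i).val : ZMod 4) * ((v.1 i).val : ZMod 4) + ∑ j, u.2 j * v.2 j

/-- The dual of a subset of the mixed ambient space. -/
def zdual {α β : ℕ} (C : Set (Amb α β)) : Set (Amb α β) :=
  {v | ∀ u ∈ C, zinner u v = 0}

/-- The vector `2u*v = (0 | 2u'*v')` (componentwise product; doubling kills the binary part). -/
def star2 {α β : ℕ} (u v : Amb α β) : Amb α β :=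
  (0, fun j => 2 * u.2 j * v.2 j)

/-- The usual Gray map `Z4 → Z2²`. -/
def gray (x : ZMod 4) : ZMod 2 × ZMod 2 :=
  match x.val with
  | 0 => (0, 0)
  | 1 => (0, 1)
  | 2 => (1, 1)
  | _ => (1, 0)

/-- The extended Gray map `Φ : Z2^α × Z4^β → Z2^{α+2β}`. -/
def Phi {α β : ℕ} (u : Amb α β) : Bin α β :=
  (u.1, fun j => (gray (u.2 j)).1, fun j => (gray (u.2 j)).2)

/-- The standard binary inner product on `Z2^{α+2β}`. -/
def binner {α β : ℕ} (x y : Bin α β) : ZMod 2 :=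
  ∑ i, x.1 i * y.1 i + ∑ j, x.2.1 j * y.2.1 j + ∑ j, x.2.2 j * y.2.2 j

/-- The dual of a subset of `Z2^{α+2β}`. -/
def bdual {α β : ℕ} (S : Set (Bin α β)) : Set (Bin α β) :=
  {y | ∀ x ∈ S, binner x y = 0}

/-- A subset of `Z2^{α+2β}` is a linear binary code if it is a linear subspace. -/
def IsLinear {α β : ℕ} (S : Set (Bin α β)) : Prop :=
  ∃ M : Submodule (ZMod 2) (Bin α β), ↑M = S

/-- The set `D_C = {2u*v : u ∈ C, v ∈ C⊥}`. -/
def DC {α β : ℕ} (C : Set (Amb α β)) : Set (Amb α β) :=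
  {x | ∃ u ∈ C, ∃ v ∈ zdual C, x = star2 u v}

/-- The standard binary inner product on `Z2^n`. -/
def binner2 {n : ℕ} (u v : Fin n → ZMod 2) : ZMod 2 := ∑ i, u i * v i

/-- The dual of a subset of `Z2^n`. -/
def bdual2 {n : ℕ} (C : Set (Fin n → ZMod 2)) : Set (Fin n → ZMod 2) :=
  {v | ∀ u ∈ C, binner2 u v = 0}


section AuxLemmas

/-- Reduction mod 2. -/
def red (a : ZMod 4) : ZMod 2 := (a.val : ZMod 2)

lemma red_add : ∀ a b : ZMod 4, red (a + b) = red a + red b := by decide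
lemma red_neg : ∀ a : ZMod 4, red (-a) = red a := by decide
lemma red_zero : red 0 = 0 := by decide
lemma red_one : red 1 = 1 := by decide
lemma gray_fst_add : ∀ a b : ZMod 4, (gray (a + b + 2*a*b)).1 = (gray a).1 + (gray b).1 := by
  decide
lemma gray_snd_add : ∀ a b : ZMod 4, (gray (a + b + 2*a*b)).2 = (gray a).2 + (gray b).2 := by
  decide
lemma gray_sum_red : ∀ a : ZMod 4, (gray a).1 + (gray a).2 = red a := by decide
lemma gray_zero_iff : ∀ a : ZMod 4, (gray a).1 = 0 → (gray a).2 = 0 → a = 0 := by decide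
lemma gray_zero : gray 0 = (0, 0) := rfl
lemma gray_one : gray 1 = (0, 1) := rfl
lemma gray_two : gray 2 = (1, 1) := rfl

lemma Phi_zero {α β : ℕ} : Phi (0 : Amb α β) = 0 := rfl

lemma Phi_add {α β : ℕ} (u v : Amb α β) :
    Phi (u + v + star2 u v) = Phi u + Phi v := by
  have h2 : ∀ j, (u + v + star2 u v).2 j = u.2 j + v.2 j + 2 * u.2 j * v.2 j := fun j => rfl
  refine Prod.ext ?_ (Prod.ext ?_ ?_)
  · show (u.1 + v.1 + 0) = u.1 + v.1
    rw [add_zero]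
  · funext j
    show (gray ((u + v + star2 u v).2 j)).1 = (gray (u.2 j)).1 + (gray (v.2 j)).1
    rw [h2 j, gray_fst_add]
  · funext j
    show (gray ((u + v + star2 u v).2 j)).2 = (gray (u.2 j)).2 + (gray (v.2 j)).2
    rw [h2 j, gray_snd_add]

end AuxLemmas

/-- If `C` is generated by the rows of `(G_X | I_δ)` for an arbitrary
binary matrix `G_X`, then `Φ(C)` is a binary LCD code. -/
theorem stmt18 {α δ : ℕ} (GX : Matrix (Fin δ) (Fin α) (ZMod 2))
    (C : AddSubgroup (Amb α δ))
    (hC : C = AddSubgroup.closure (Set.range fun i =>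
      ((GX i, fun j => if j = i then (1 : ZMod 4) else 0) : Amb α δ))) :
    IsLinear (Phi '' (C : Set (Amb α δ))) ∧
    (∀ x ∈ Phi '' (C : Set (Amb α δ)),
      x ∈ bdual (Phi '' (C : Set (Amb α δ))) → x = 0) := by
  classical
  set gen : Fin δ → Amb α δ :=
    fun i => ((GX i, fun j => if j = i then (1 : ZMod 4) else 0) : Amb α δ) with hgendef
  have hgen : ∀ i, gen i ∈ C := by
    intro i; rw [hC]; exact AddSubgroup.subset_closure ⟨i, rfl⟩
  have h2gen : ∀ i, gen i + gen i
      = (((0 : Fin α → ZMod 2), fun k => if k = i then (2 : ZMod 4) else 0) : Amb α δ) := by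
    intro i
    refine Prod.ext ?_ ?_
    · funext j; exact CharTwo.add_self_eq_zero _
    · funext k
      show (if k = i then (1 : ZMod 4) else 0) + (if k = i then (1 : ZMod 4) else 0)
        = if k = i then (2 : ZMod 4) else 0
      split <;> decide
  have h2mem : ∀ i,
      (((0 : Fin α → ZMod 2), fun k => if k = i then (2 : ZMod 4) else 0) : Amb α δ) ∈ C :=
    fun i => h2gen i ▸ add_mem (hgen i) (hgen i)
  have hstar : ∀ u v : Amb α δ, star2 u v ∈ C := by
    intro u v
    have heq : star2 u v = ∑ j : Fin δ, (u.2 j * v.2 j).val •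
        (((0 : Fin α → ZMod 2), fun k => if k = j then (2 : ZMod 4) else 0) : Amb α δ) := by
      refine Prod.ext ?_ ?_
      · rw [Prod.fst_sum]
        have t : ∀ j : Fin δ, ((u.2 j * v.2 j).val •
            (((0 : Fin α → ZMod 2), fun k => if k = j then (2 : ZMod 4) else 0) : Amb α δ)).1
            = (0 : Fin α → ZMod 2) := by
          intro j
          show (u.2 j * v.2 j).val • (0 : Fin α → ZMod 2) = 0
          exact smul_zero _
        rw [Finset.sum_congr rfl (fun j _ => t j), Finset.sum_const_zero]
        rfl
      · rw [Prod.snd_sum]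
        funext k
        rw [Finset.sum_apply]
        have t : ∀ j : Fin δ, (((u.2 j * v.2 j).val •
            (((0 : Fin α → ZMod 2), fun k => if k = j then (2 : ZMod 4) else 0) : Amb α δ)).2) k
            = if k = j then (u.2 j * v.2 j).val • (2 : ZMod 4) else 0 := by
          intro j
          show (u.2 j * v.2 j).val • (if k = j then (2 : ZMod 4) else 0) = _
          split <;> simp
        rw [Finset.sum_congr rfl (fun j _ => t j), Finset.sum_ite_eq Finset.univ k
          (fun j => (u.2 j * v.2 j).val • (2 : ZMod 4))]
        simp only [Finset.mem_univ, if_true, nsmul_eq_mul, ZMod.natCast_val, ZMod.cast_id]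
        show 2 * u.2 k * v.2 k = _
        ring
    rw [heq]
    exact sum_mem (fun j _ => AddSubgroup.nsmul_mem C (h2mem j) _)
  -- every codeword satisfies the parity-check description
  have hdesc : ∀ w ∈ C, ∀ j, w.1 j = ∑ i, red (w.2 i) * GX i j := by
    intro w hw
    rw [hC] at hw
    induction hw using AddSubgroup.closure_induction with
    | mem x hx =>
        obtain ⟨i, rfl⟩ := hx
        intro j
        show GX i j = ∑ i', red (if i' = i then 1 else 0) * GX i' j
        have t : ∀ i', red (if i' = i then (1 : ZMod 4) else 0) * GX i' j
            = if i' = i then GX i' j else 0 := by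
          intro i'
          split <;> simp [red_one, red_zero]
        rw [Finset.sum_congr rfl (fun i' _ => t i'), Finset.sum_ite_eq' Finset.univ i]
        simp
    | zero => intro j; simp [red_zero]
    | add x y hx hy ihx ihy =>
        intro j
        show x.1 j + y.1 j = ∑ i, red (x.2 i + y.2 i) * GX i j
        rw [ihx j, ihy j, ← Finset.sum_add_distrib]
        exact Finset.sum_congr rfl (fun i _ => by rw [red_add, add_mul])
    | neg x hx ihx =>
        intro j
        show -(x.1 j) = ∑ i, red (-(x.2 i)) * GX i j
        rw [CharTwo.neg_eq, ihx j]
        exact Finset.sum_congr rfl (fun i _ => by rw [red_neg])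
  constructor
  · -- linearity
    refine ⟨{ carrier := Phi '' (C : Set (Amb α δ)),
              add_mem' := ?_, zero_mem' := ⟨0, C.zero_mem, Phi_zero⟩,
              smul_mem' := ?_ }, rfl⟩
    · rintro x y ⟨u, hu, rfl⟩ ⟨v, hv, rfl⟩
      exact ⟨u + v + star2 u v, add_mem (add_mem hu hv) (hstar u v), Phi_add u v⟩
    · intro c x hx
      rcases (by decide : ∀ c : ZMod 2, c = 0 ∨ c = 1) c with rfl | rfl
      · rw [zero_smul]; exact ⟨0, C.zero_mem, Phi_zero⟩
      · rw [one_smul]; exact hx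
  · -- LCD property
    rintro x ⟨w, hwC, rfl⟩ hdual
    have h1 : ∀ i, (gray (w.2 i)).1 + (gray (w.2 i)).2 = 0 := by
      intro i
      have hthis := hdual _ ⟨_, h2mem i, rfl⟩
      unfold binner Phi at hthis
      simp only [apply_ite gray, gray_two, gray_zero] at hthis
      have e1 : ∑ j, ((0 : Fin α → ZMod 2) j) * w.1 j = 0 := by simp
      have t2 : ∀ j : Fin δ, (if j = i then ((1,1) : ZMod 2 × ZMod 2) else (0,0)).1
          * (gray (w.2 j)).1 = if j = i then (gray (w.2 j)).1 else 0 := by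
        intro j; split <;> simp
      have e2 : (∑ j, (if j = i then ((1,1) : ZMod 2 × ZMod 2) else (0,0)).1 * (gray (w.2 j)).1)
          = (gray (w.2 i)).1 := by
        rw [Finset.sum_congr rfl (fun j _ => t2 j),
          Finset.sum_ite_eq' Finset.univ i (fun j => (gray (w.2 j)).1)]
        simp
      have t3 : ∀ j : Fin δ, (if j = i then ((1,1) : ZMod 2 × ZMod 2) else (0,0)).2
          * (gray (w.2 j)).2 = if j = i then (gray (w.2 j)).2 else 0 := by
        intro j; split <;> simp
      have e3 : (∑ j, (if j = i then ((1,1) : ZMod 2 × ZMod 2) else (0,0)).2 * (gray (w.2 j)).2)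
          = (gray (w.2 i)).2 := by
        rw [Finset.sum_congr rfl (fun j _ => t3 j),
          Finset.sum_ite_eq' Finset.univ i (fun j => (gray (w.2 j)).2)]
        simp
      rw [e1, e2, e3, zero_add] at hthis
      exact hthis
    have hred0 : ∀ i, red (w.2 i) = 0 := fun i => (gray_sum_red (w.2 i)).symm.trans (h1 i)
    have hw1 : w.1 = 0 := by
      funext j
      rw [hdesc w hwC j]
      simp [hred0]
    have h2 : ∀ i, (gray (w.2 i)).2 = 0 := by
      intro i
      have hthis := hdual _ ⟨gen i, hgen i, rfl⟩
      unfold binner Phi at hthis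
      simp only [hgendef, apply_ite gray, gray_one, gray_zero] at hthis
      have e1 : ∑ j, GX i j * w.1 j = 0 := by rw [hw1]; simp
      have t2 : ∀ j : Fin δ, (if j = i then ((0,1) : ZMod 2 × ZMod 2) else (0,0)).1
          * (gray (w.2 j)).1 = 0 := by
        intro j; split <;> simp
      have e2 : (∑ j, (if j = i then ((0,1) : ZMod 2 × ZMod 2) else (0,0)).1 * (gray (w.2 j)).1)
          = 0 := by
        rw [Finset.sum_congr rfl (fun j _ => t2 j), Finset.sum_const_zero]
      have t3 : ∀ j : Fin δ, (if j = i then ((0,1) : ZMod 2 × ZMod 2) else (0,0)).2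
          * (gray (w.2 j)).2 = if j = i then (gray (w.2 j)).2 else 0 := by
        intro j; split <;> simp
      have e3 : (∑ j, (if j = i then ((0,1) : ZMod 2 × ZMod 2) else (0,0)).2 * (gray (w.2 j)).2)
          = (gray (w.2 i)).2 := by
        rw [Finset.sum_congr rfl (fun j _ => t3 j),
          Finset.sum_ite_eq' Finset.univ i (fun j => (gray (w.2 j)).2)]
        simp
      rw [e1, e2, e3, zero_add, zero_add] at hthis
      exact hthis
    have hw2 : w.2 = 0 := by
      funext i
      refine gray_zero_iff (w.2 i) ?_ (h2 i)
      have := h1 i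
      rw [h2 i, add_zero] at this
      exact this
    rw [show w = 0 from Prod.ext hw1 hw2, Phi_zero]
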